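/- Let S be a finite nonempty set, z ∈ ℍ, v ∈ ℝ, and g, h : S → ℍ. Then z − v + Σ_{x∈S} g_x ∈ ℍ and z − v + Σ_{x∈S} h_x ∈ ℍ, and γ(−(z − v + Σ_{x∈S} g_x)⁻¹, −(z − v + Σ_{x∈S} h_x)⁻¹) ≤ Σ_{x∈S} (Im h_x / Σ_{u∈S} Im h_u) · (Σ_{y∈S} q_y(g) · Q_{x,y} · cos α_{x,y}) · γ(g_x, h_x). -/

import Mathlib

/-- The hyperbolic semi-metric `γ(g,h) = |g-h|² / (Im g · Im h)` on the upper half plane. -/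
noncomputable def gam (g h : ℂ) : ℝ := ‖g - h‖ ^ 2 / (g.im * h.im)

/-- `cos α_{x,y}` formed from the values `g_x, h_x, g_y, h_y`. -/
noncomputable def cosAlpha (gx hx gy hy : ℂ) : ℝ :=
  if gx ≠ hx ∧ gy ≠ hy then
    ((gx - hx) * (starRingEnd ℂ) (gy - hy)).re /
      (‖gx - hx‖ * ‖gy - hy‖)
  else 0

/-- `Q_{x,y}` formed from the values `g_x, h_x, g_y, h_y`. -/
noncomputable def Qquot (gx hx gy hy : ℂ) : ℝ :=
  if gx ≠ hx ∧ gy ≠ hy then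
    Real.sqrt (gx.im * gy.im * hx.im * hy.im * gam gx hx * gam gy hy) /
      ((1 / 2) * (gx.im * hy.im * gam gy hy + gy.im * hx.im * gam gx hx))
  else 0

/-- Key pairwise symmetrization identity. -/
lemma pair_key (a b c d : ℂ) (ha : 0 < a.im) (hb : 0 < b.im) (hc : 0 < c.im) (hd : 0 < d.im) :
    b.im * c.im * (Qquot a b c d * cosAlpha a b c d * gam a b)
      + d.im * a.im * (Qquot c d a b * cosAlpha c d a b * gam c d)
      = 2 * ((a - b) * (starRingEnd ℂ) (c - d)).re := by
  by_cases hab : a = b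
  · simp [Qquot, cosAlpha, hab]
  by_cases hcd : c = d
  · simp [Qquot, cosAlpha, hcd]
  have h1 : (0:ℝ) < ‖a - b‖ := by
    simpa using (norm_pos_iff.mpr (sub_ne_zero.mpr hab))
  have h2 : (0:ℝ) < ‖c - d‖ := by
    simpa using (norm_pos_iff.mpr (sub_ne_zero.mpr hcd))
  rw [Qquot, cosAlpha, Qquot, cosAlpha, if_pos ⟨hab, hcd⟩, if_pos ⟨hab, hcd⟩,
    if_pos ⟨hcd, hab⟩, if_pos ⟨hcd, hab⟩]
  have hs1 : a.im * c.im * b.im * d.im * gam a b * gam c d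
      = (‖a - b‖ * ‖c - d‖) ^ 2 := by
    unfold gam; field_simp
  have hs2 : c.im * a.im * d.im * b.im * gam c d * gam a b
      = (‖a - b‖ * ‖c - d‖) ^ 2 := by
    unfold gam; field_simp
  rw [hs1, hs2, Real.sqrt_sq (by positivity)]
  have hR : ((c - d) * (starRingEnd ℂ) (a - b)).re = ((a - b) * (starRingEnd ℂ) (c - d)).re := by
    rw [← Complex.conj_re ((c - d) * (starRingEnd ℂ) (a - b))]
    simp [mul_comm]
  rw [hR]
  have hD : (0:ℝ) < a.im * d.im * gam c d + c.im * b.im * gam a b := by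
    unfold gam; positivity
  unfold gam
  unfold gam at hD
  set R := ((a - b) * (starRingEnd ℂ) (c - d)).re
  field_simp
  ring

lemma gam_inv (G H : ℂ) (hG0 : G ≠ 0) (hH0 : H ≠ 0) :
    gam (-G⁻¹) (-H⁻¹) = ‖G - H‖ ^ 2 / (G.im * H.im) := by
  have hdiff : -G⁻¹ - -H⁻¹ = (G - H) / (G * H) := by field_simp; ring
  have him1 : (-G⁻¹).im = G.im / Complex.normSq G := by
    simp [Complex.inv_im, neg_div]
  have him2 : (-H⁻¹).im = H.im / Complex.normSq H := by
    simp [Complex.inv_im, neg_div]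
  have hns1 : Complex.normSq G ≠ 0 := ne_of_gt (Complex.normSq_pos.mpr hG0)
  have hns2 : Complex.normSq H ≠ 0 := ne_of_gt (Complex.normSq_pos.mpr hH0)
  rw [gam, hdiff, him1, him2, norm_div, norm_mul, div_pow, mul_pow]
  simp only [← Complex.sq_norm]
  have e1 : ‖G‖ ^ 2 ≠ 0 := by
    have := norm_pos_iff.mpr hG0; positivity
  have e2 : ‖H‖ ^ 2 ≠ 0 := by
    have := norm_pos_iff.mpr hH0; positivity
  field_simp

theorem one_step_expansion_estimate
    {S : Type*} [Fintype S] [Nonempty S]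
    (z : ℂ) (hz : 0 < z.im) (v : ℝ)
    (g h : S → ℂ) (hg : ∀ x, 0 < (g x).im) (hh : ∀ x, 0 < (h x).im) :
    0 < (z - (v : ℂ) + ∑ x, g x).im ∧ 0 < (z - (v : ℂ) + ∑ x, h x).im ∧
      gam (-(z - (v : ℂ) + ∑ x, g x)⁻¹) (-(z - (v : ℂ) + ∑ x, h x)⁻¹) ≤
        ∑ x, ((h x).im / ∑ u, (h u).im) *
          (∑ y, ((g y).im / ∑ u, (g u).im) * Qquot (g x) (h x) (g y) (h y) *
            cosAlpha (g x) (h x) (g y) (h y)) * gam (g x) (h x) := by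
  classical
  have hA : (0:ℝ) < ∑ u, (g u).im := Finset.sum_pos (fun u _ => hg u) Finset.univ_nonempty
  have hB : (0:ℝ) < ∑ u, (h u).im := Finset.sum_pos (fun u _ => hh u) Finset.univ_nonempty
  set A : ℝ := ∑ u, (g u).im
  set B : ℝ := ∑ u, (h u).im
  set G : ℂ := z - (v:ℂ) + ∑ x, g x with hGdef
  set H : ℂ := z - (v:ℂ) + ∑ x, h x with hHdef
  have hGim : G.im = z.im + A := by
    simp [hGdef, Complex.add_im, Complex.sub_im, Complex.im_sum, A]
  have hHim : H.im = z.im + B := by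
    simp [hHdef, Complex.add_im, Complex.sub_im, Complex.im_sum, B]
  have hGim' : 0 < G.im := by rw [hGim]; linarith
  have hHim' : 0 < H.im := by rw [hHim]; linarith
  refine ⟨hGim', hHim', ?_⟩
  have hG0 : G ≠ 0 := fun e => by rw [e] at hGim'; simp at hGim'
  have hH0 : H ≠ 0 := fun e => by rw [e] at hHim'; simp at hHim'
  -- the left-hand side
  have hGH : G - H = ∑ x, (g x - h x) := by
    rw [Finset.sum_sub_distrib, hGdef, hHdef]; ring
  rw [gam_inv G H hG0 hH0]
  -- rewrite the right-hand side as a double sum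
  set W : ℂ := ∑ x, (g x - h x) with hW
  have hRHS : (∑ x, ((h x).im / B) *
        (∑ y, ((g y).im / A) * Qquot (g x) (h x) (g y) (h y) *
          cosAlpha (g x) (h x) (g y) (h y)) * gam (g x) (h x))
      = ‖W‖ ^ 2 / (A * B) := by
    have step1 : ∀ x : S, ((h x).im / B) *
        (∑ y, ((g y).im / A) * Qquot (g x) (h x) (g y) (h y) *
          cosAlpha (g x) (h x) (g y) (h y)) * gam (g x) (h x)
        = (∑ y, (h x).im * (g y).im *
            (Qquot (g x) (h x) (g y) (h y) * cosAlpha (g x) (h x) (g y) (h y) *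
              gam (g x) (h x))) / (A * B) := by
      intro x
      rw [Finset.mul_sum, Finset.sum_mul, Finset.sum_div]
      apply Finset.sum_congr rfl
      intro y _
      field_simp
    simp only [step1]
    rw [← Finset.sum_div]
    congr 1
    -- the double sum equals |W|^2
    have hsym : (∑ x, ∑ y, (h x).im * (g y).im *
          (Qquot (g x) (h x) (g y) (h y) * cosAlpha (g x) (h x) (g y) (h y) *
            gam (g x) (h x)))
        = ∑ x, ∑ y, ((g x - h x) * (starRingEnd ℂ) (g y - h y)).re := by
      have comm : (∑ x, ∑ y, (h x).im * (g y).im *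
            (Qquot (g x) (h x) (g y) (h y) * cosAlpha (g x) (h x) (g y) (h y) *
              gam (g x) (h x)))
          = ∑ x, ∑ y, (h y).im * (g x).im *
            (Qquot (g y) (h y) (g x) (h x) * cosAlpha (g y) (h y) (g x) (h x) *
              gam (g y) (h y)) := by rw [Finset.sum_comm]
      have two_eq : (∑ x, ∑ y, (h x).im * (g y).im *
            (Qquot (g x) (h x) (g y) (h y) * cosAlpha (g x) (h x) (g y) (h y) *
              gam (g x) (h x)))
          + (∑ x, ∑ y, (h x).im * (g y).im *
            (Qquot (g x) (h x) (g y) (h y) * cosAlpha (g x) (h x) (g y) (h y) *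
              gam (g x) (h x)))
          = ∑ x, ∑ y, 2 * ((g x - h x) * (starRingEnd ℂ) (g y - h y)).re := by
        nth_rewrite 1 [comm]
        rw [← Finset.sum_add_distrib]
        apply Finset.sum_congr rfl
        intro x _
        rw [← Finset.sum_add_distrib]
        apply Finset.sum_congr rfl
        intro y _
        have := pair_key (g x) (h x) (g y) (h y) (hg x) (hh x) (hg y) (hh y)
        linarith
      have htwo : ∀ x : S, ∑ y, 2 * ((g x - h x) * (starRingEnd ℂ) (g y - h y)).re
          = 2 * ∑ y, ((g x - h x) * (starRingEnd ℂ) (g y - h y)).re := by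
        intro x; rw [Finset.mul_sum]
      simp only [htwo, ← Finset.mul_sum] at two_eq
      linarith
    rw [hsym]
    have : (∑ x, ∑ y, ((g x - h x) * (starRingEnd ℂ) (g y - h y)).re)
        = (W * (starRingEnd ℂ) W).re := by
      rw [hW, map_sum, Finset.sum_mul, Complex.re_sum]
      apply Finset.sum_congr rfl
      intro x _
      rw [Finset.mul_sum, Complex.re_sum]
    rw [this, Complex.mul_conj]
    simp [Complex.sq_norm]
  rw [hRHS, hGH, hGim, hHim]
  have hle : A * B ≤ (z.im + A) * (z.im + B) := by nlinarith
  apply div_le_div_of_nonneg_left (by positivity) (by positivity) hle
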